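/- For n ≥ 1, the number of involutions of [n] that I-avoid 123 equals the sum over k from 1 to n of ⌊k/2⌋! · ⌊(n−k)/2⌋! · C(n − ⌊k/2⌋ − 1, n − k). -/

import Mathlib

open Finset Equiv

namespace Iav123

variable {n : ℕ}

def cmin (τ : Perm (Fin n)) (x : Fin n) : Fin n := min x (τ x)
def cmax (τ : Perm (Fin n)) (x : Fin n) : Fin n := max x (τ x)

lemma tau_cmin {τ : Perm (Fin n)} (hτ : Function.Involutive τ) (x : Fin n) :
    τ (cmin τ x) = cmax τ x := by
  rcases le_total x (τ x) with h | h
  · simp [cmin, cmax, min_eq_left h, max_eq_right h]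
  · simp [cmin, cmax, min_eq_right h, max_eq_left h, hτ x]

lemma cmin_le_cmax (τ : Perm (Fin n)) (x : Fin n) : cmin τ x ≤ cmax τ x := min_le_max

lemma cmin_tau {τ : Perm (Fin n)} (hτ : Function.Involutive τ) (x : Fin n) :
    cmin τ (τ x) = cmin τ x := by simp [cmin, hτ x, min_comm]

lemma cmax_tau {τ : Perm (Fin n)} (hτ : Function.Involutive τ) (x : Fin n) :
    cmax τ (τ x) = cmax τ x := by simp [cmax, hτ x, max_comm]

/-- the pattern condition, cycle form -/
def Pat (τ : Perm (Fin n)) : Prop :=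
  ∃ x y z : Fin n, cmax τ x < cmin τ y ∧ cmax τ y < cmin τ z

lemma pat_iff {τ : Perm (Fin n)} (hτ : Function.Involutive τ) :
    (∃ a b c : Fin n, a ≤ τ a ∧ b ≤ τ b ∧ c ≤ τ c ∧ τ a < b ∧ τ b < c) ↔ Pat τ := by
  constructor
  · rintro ⟨a, b, c, ha, hb, hc, hab, hbc⟩
    refine ⟨a, b, c, ?_, ?_⟩
    · have h1 : cmax τ a = τ a := max_eq_right ha
      have h2 : cmin τ b = b := min_eq_left hb
      rw [h1, h2]; exact hab
    · have h1 : cmax τ b = τ b := max_eq_right hb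
      have h2 : cmin τ c = c := min_eq_left hc
      rw [h1, h2]; exact hbc
  · rintro ⟨x, y, z, hxy, hyz⟩
    refine ⟨cmin τ x, cmin τ y, cmin τ z, ?_, ?_, ?_, ?_, ?_⟩
    · rw [tau_cmin hτ]; exact cmin_le_cmax τ x
    · rw [tau_cmin hτ]; exact cmin_le_cmax τ y
    · rw [tau_cmin hτ]; exact cmin_le_cmax τ z
    · rw [tau_cmin hτ]; exact hxy
    · rw [tau_cmin hτ]; exact hyz

section withN
variable [NeZero n]

def Bv (τ : Perm (Fin n)) : Fin n := univ.inf' univ_nonempty (cmax τ)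
def Av (τ : Perm (Fin n)) : Fin n := univ.sup' univ_nonempty (cmin τ)
def stat (τ : Perm (Fin n)) : ℕ := (univ.filter fun x => cmin τ x ≤ Bv τ).card

lemma Bv_le (τ : Perm (Fin n)) (x : Fin n) : Bv τ ≤ cmax τ x :=
  inf'_le _ (mem_univ x)

lemma le_Av (τ : Perm (Fin n)) (x : Fin n) : cmin τ x ≤ Av τ :=
  le_sup' _ (mem_univ x)

lemma good_iff (τ : Perm (Fin n)) :
    ¬ Pat τ ↔ ∀ x, cmin τ x ≤ Bv τ ∨ Av τ ≤ cmax τ x := by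
  constructor
  · intro h x
    by_contra hc
    push_neg at hc
    obtain ⟨h1, h2⟩ := hc
    obtain ⟨x₀, -, hx₀⟩ := exists_mem_eq_inf' (univ_nonempty) (cmax τ)
    obtain ⟨z₀, -, hz₀⟩ := exists_mem_eq_sup' (univ_nonempty) (cmin τ)
    exact h ⟨x₀, x, z₀, by rw [← hx₀]; exact h1, by rw [← hz₀]; exact h2⟩
  · rintro h ⟨x, y, z, hxy, hyz⟩
    rcases h y with h1 | h1
    · exact absurd (lt_of_le_of_lt (Bv_le τ x) hxy) (not_lt.2 h1)
    · exact absurd (lt_of_lt_of_le hyz (le_Av τ z)) (not_lt.2 h1)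

lemma tau_cmax {τ : Perm (Fin n)} (hτ : Function.Involutive τ) (x : Fin n) :
    τ (cmax τ x) = cmin τ x := by
  rcases le_total x (τ x) with h | h
  · simp [cmin, cmax, min_eq_left h, max_eq_right h, hτ x]
  · simp [cmin, cmax, min_eq_right h, max_eq_left h]

lemma tauBv_le {τ : Perm (Fin n)} (hτ : Function.Involutive τ) : τ (Bv τ) ≤ Bv τ := by
  obtain ⟨x₀, -, hx₀⟩ := exists_mem_eq_inf' (univ_nonempty (α := Fin n)) (cmax τ)
  have hB : Bv τ = cmax τ x₀ := hx₀
  rw [hB, tau_cmax hτ]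
  exact cmin_le_cmax τ x₀

lemma lt_Bv_lt {τ : Perm (Fin n)} {x : Fin n} (h : x < Bv τ) :
    x < τ x ∧ Bv τ ≤ τ x := by
  have h1 : Bv τ ≤ cmax τ x := Bv_le τ x
  have h2 : x < cmax τ x := lt_of_lt_of_le h h1
  have h3 : cmax τ x = τ x := by
    rcases le_total x (τ x) with he | he
    · exact max_eq_right he
    · rw [cmax, max_eq_left he] at h2
      exact absurd h2 (lt_irrefl x)
  exact ⟨h3 ▸ h2, h3 ▸ h1⟩

lemma filter_cmin_le {τ : Perm (Fin n)} (hτ : Function.Involutive τ) :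
    (univ.filter fun x => cmin τ x ≤ Bv τ) = Iic (Bv τ) ∪ (Iio (Bv τ)).image τ := by
  ext x
  simp only [mem_filter, mem_univ, true_and, mem_union, mem_Iic, mem_image, mem_Iio]
  constructor
  · intro hx
    rcases le_or_gt x (Bv τ) with h | h
    · exact Or.inl h
    · have hτx : τ x ≤ Bv τ := by
        have : cmin τ x = τ x := by
          rcases le_total x (τ x) with he | he
          · rw [cmin, min_eq_left he] at hx
            exact absurd (lt_of_le_of_lt hx h) (lt_irrefl x)
          · exact min_eq_right he
        exact this ▸ hx
      have hne : τ x ≠ Bv τ := by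
        intro he
        have : x = τ (Bv τ) := by rw [← he, hτ x]
        exact absurd (this ▸ tauBv_le hτ) (not_le.2 h)
      exact Or.inr ⟨τ x, lt_of_le_of_ne hτx hne, hτ x⟩
  · rintro (h | ⟨y, hy, rfl⟩)
    · exact le_trans (min_le_left _ _) h
    · rw [cmin_tau hτ]
      exact le_trans (min_le_left _ _) hy.le

lemma inter_eq {τ : Perm (Fin n)} (hτ : Function.Involutive τ) :
    Iic (Bv τ) ∩ (Iio (Bv τ)).image τ = if τ (Bv τ) = Bv τ then ∅ else {Bv τ} := by
  ext x
  simp only [mem_inter, mem_Iic, mem_image, mem_Iio]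
  split_ifs with hfix
  · simp only [notMem_empty, iff_false]
    rintro ⟨hx, y, hy, rfl⟩
    have := (lt_Bv_lt hy).2
    have hxB : τ y = Bv τ := le_antisymm hx this
    have : y = Bv τ := by rw [← hfix, ← hxB, hτ y]
    exact absurd (this ▸ hy) (lt_irrefl _)
  · simp only [mem_singleton]
    constructor
    · rintro ⟨hx, y, hy, rfl⟩
      exact le_antisymm hx (lt_Bv_lt hy).2
    · rintro rfl
      refine ⟨le_refl _, τ (Bv τ), lt_of_le_of_ne (tauBv_le hτ) hfix, hτ _⟩

lemma stat_spec {τ : Perm (Fin n)} (hτ : Function.Involutive τ) :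
    stat τ = 2 * (Bv τ : ℕ) + (if τ (Bv τ) = Bv τ then 1 else 0) := by
  have key := card_union_add_card_inter (Iic (Bv τ)) ((Iio (Bv τ)).image τ)
  rw [inter_eq hτ] at key
  rw [Fin.card_Iic, card_image_of_injective _ τ.injective, Fin.card_Iio] at key
  have hs : stat τ = (Iic (Bv τ) ∪ (Iio (Bv τ)).image τ).card := by
    rw [stat, filter_cmin_le hτ]
  split_ifs at key ⊢ with hfix
  · simp only [card_empty] at key; omega
  · simp only [card_singleton] at key; omega

/-- the "right family" -/
def Sset (τ : Perm (Fin n)) : Finset (Fin n) := univ.filter fun x => Bv τ < cmin τ x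

lemma Sset_card (τ : Perm (Fin n)) : (Sset τ).card = n - stat τ := by
  have h := card_filter_add_card_filter_not (s := (univ : Finset (Fin n)))
    (p := fun x => cmin τ x ≤ Bv τ)
  have h2 : (univ.filter fun x => ¬ cmin τ x ≤ Bv τ) = Sset τ := by
    apply filter_congr; intro x _; simp [not_le, Sset]
  rw [h2, card_univ, Fintype.card_fin] at h
  have hst : stat τ = (univ.filter fun x => cmin τ x ≤ Bv τ).card := rfl
  rw [← hst] at h
  omega

/-- index of an element in the sorted order of a finset equals the number of smaller members -/
lemma orderIso_idx {S : Finset (Fin n)} {s : ℕ} (hS : S.card = s) {x : Fin n} (hx : x ∈ S) :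
    (((S.orderIsoOfFin hS).symm ⟨x, hx⟩ : Fin s) : ℕ) = (S.filter (· < x)).card := by
  set e := S.orderIsoOfFin hS with he
  set i := e.symm ⟨x, hx⟩ with hi
  have hei : (e i : Fin n) = x := by rw [hi]; simp
  have himg : S.filter (· < x) = (Finset.Iio i).image (fun t => (e t : Fin n)) := by
    ext y
    simp only [mem_filter, mem_image, Finset.mem_Iio]
    constructor
    · rintro ⟨hyS, hyx⟩
      refine ⟨e.symm ⟨y, hyS⟩, ?_, by simp⟩
      exact e.symm.lt_iff_lt.2 (Subtype.mk_lt_mk.2 hyx)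
    · rintro ⟨t, ht, rfl⟩
      refine ⟨(e t).2, ?_⟩
      have : e t < e i := e.lt_iff_lt.2 ht
      rw [← hei]
      exact Subtype.coe_lt_coe.2 this
  rw [himg, card_image_of_injective _ (fun a b hab => e.injective (Subtype.ext hab)),
    Fin.card_Iio]

section good
variable {τ : Perm (Fin n)} [NeZero n]

lemma mem_Sset_iff {x : Fin n} : x ∈ Sset τ ↔ Bv τ < x ∧ Bv τ < τ x := by
  simp [Sset, cmin, lt_min_iff]

lemma tau_mem_Sset (hτ : Function.Involutive τ) {x : Fin n} (hx : x ∈ Sset τ) :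
    τ x ∈ Sset τ := by
  rw [mem_Sset_iff] at hx ⊢
  rw [hτ x]
  exact ⟨hx.2, hx.1⟩

lemma pin_A (hG : ¬ Pat τ) {x : Fin n} (hx : x ∈ Sset τ) : Av τ ≤ cmax τ x := by
  rcases (good_iff τ).1 hG x with h | h
  · rw [Sset, mem_filter] at hx
    exact absurd h (not_le.2 hx.2)
  · exact h

/-- the three classes inside the right family -/
def MinS (τ : Perm (Fin n)) : Finset (Fin n) := (Sset τ).filter fun x => x < τ x
def FixS (τ : Perm (Fin n)) : Finset (Fin n) := (Sset τ).filter fun x => τ x = x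
def MaxS (τ : Perm (Fin n)) : Finset (Fin n) := (Sset τ).filter fun x => τ x < x

lemma fix_eq_Av (hG : ¬ Pat τ) {x : Fin n} (hx : x ∈ FixS τ) : x = Av τ := by
  rw [FixS, mem_filter] at hx
  have h1 : Av τ ≤ cmax τ x := pin_A hG hx.1
  have h2 : cmin τ x ≤ Av τ := le_Av τ x
  rw [cmax, hx.2, max_self] at h1
  rw [cmin, hx.2, min_self] at h2
  exact le_antisymm h2 h1

lemma min_le_Av {x : Fin n} (hx : x ∈ MinS τ) : x ≤ Av τ := by
  rw [MinS, mem_filter] at hx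
  have h2 : cmin τ x ≤ Av τ := le_Av τ x
  rwa [cmin, min_eq_left hx.2.le] at h2

lemma Av_le_max (hG : ¬ Pat τ) {x : Fin n} (hx : x ∈ MaxS τ) : Av τ ≤ x := by
  rw [MaxS, mem_filter] at hx
  have h1 : Av τ ≤ cmax τ x := pin_A hG hx.1
  rwa [cmax, max_eq_left hx.2.le] at h1

lemma min_lt_max (hG : ¬ Pat τ) {x y : Fin n} (hx : x ∈ MinS τ) (hy : y ∈ MaxS τ) :
    x < y := by
  refine lt_of_le_of_ne ((min_le_Av hx).trans (Av_le_max hG hy)) fun he => ?_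
  rw [MinS, mem_filter] at hx; rw [MaxS, mem_filter] at hy
  rw [he] at hx
  exact lt_asymm hx.2 hy.2

lemma min_lt_fix (hG : ¬ Pat τ) {x y : Fin n} (hx : x ∈ MinS τ) (hy : y ∈ FixS τ) :
    x < y := by
  refine lt_of_le_of_ne ((fix_eq_Av hG hy) ▸ min_le_Av hx) fun he => ?_
  rw [MinS, mem_filter] at hx; rw [FixS, mem_filter] at hy
  rw [he] at hx
  rw [hy.2] at hx
  exact lt_irrefl y hx.2

lemma fix_lt_max (hG : ¬ Pat τ) {x y : Fin n} (hx : x ∈ FixS τ) (hy : y ∈ MaxS τ) :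
    x < y := by
  refine lt_of_le_of_ne ((fix_eq_Av hG hx) ▸ Av_le_max hG hy) fun he => ?_
  rw [FixS, mem_filter] at hx; rw [MaxS, mem_filter] at hy
  rw [← he] at hy
  rw [hx.2] at hy
  exact lt_irrefl x hy.2

lemma MaxS_eq_image (hτ : Function.Involutive τ) : MaxS τ = (MinS τ).image τ := by
  ext y
  simp only [MaxS, MinS, mem_filter, mem_image]
  constructor
  · rintro ⟨hyS, hy⟩
    exact ⟨τ y, ⟨tau_mem_Sset hτ hyS, by rw [hτ y]; exact hy⟩, hτ y⟩
  · rintro ⟨x, ⟨hxS, hx⟩, rfl⟩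
    exact ⟨tau_mem_Sset hτ hxS, by rw [hτ x]; exact hx⟩

lemma FixS_card_le (hG : ¬ Pat τ) : (FixS τ).card ≤ 1 := by
  refine card_le_one.2 fun a ha b hb => ?_
  rw [fix_eq_Av hG ha, fix_eq_Av hG hb]

lemma Sset_card_split (hτ : Function.Involutive τ) (hG : ¬ Pat τ) :
    (Sset τ).card = 2 * (MinS τ).card + (FixS τ).card := by
  have hdisj1 : Disjoint (MinS τ) (FixS τ) := by
    rw [disjoint_left]
    intro a ha hb
    exact absurd rfl (min_lt_fix hG ha hb).ne
  have hdisj2 : Disjoint (MinS τ ∪ FixS τ) (MaxS τ) := by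
    rw [disjoint_left]
    intro a ha hb
    rcases mem_union.1 ha with h | h
    · exact absurd rfl (min_lt_max hG h hb).ne
    · exact absurd rfl (fix_lt_max hG h hb).ne
  have hcover : Sset τ = MinS τ ∪ FixS τ ∪ MaxS τ := by
    ext x
    constructor
    · intro hx
      rcases lt_trichotomy x (τ x) with h | h | h
      · exact mem_union_left _ (mem_union_left _ (mem_filter.2 ⟨hx, h⟩))
      · exact mem_union_left _ (mem_union_right _ (mem_filter.2 ⟨hx, h.symm⟩))
      · exact mem_union_right _ (mem_filter.2 ⟨hx, h⟩)
    · intro hx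
      rcases mem_union.1 hx with h | h
      · rcases mem_union.1 h with h2 | h2
        · exact (mem_filter.1 h2).1
        · exact (mem_filter.1 h2).1
      · exact (mem_filter.1 h).1
  have hmax : (MaxS τ).card = (MinS τ).card := by
    rw [MaxS_eq_image hτ, card_image_of_injective _ τ.injective]
  rw [hcover, card_union_of_disjoint hdisj2, card_union_of_disjoint hdisj1, hmax]
  ring

/-- number of smaller elements within the right family -/
def idxc (τ : Perm (Fin n)) (x : Fin n) : ℕ := ((Sset τ).filter (· < x)).card

lemma MinS_card (hτ : Function.Involutive τ) (hG : ¬ Pat τ) :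
    (MinS τ).card = (Sset τ).card / 2 ∧ (FixS τ).card = (Sset τ).card % 2 := by
  have h1 := Sset_card_split hτ hG
  have h2 := FixS_card_le hG
  omega

lemma idx_min (hτ : Function.Involutive τ) (hG : ¬ Pat τ) {x : Fin n} (hx : x ∈ MinS τ) :
    idxc τ x < (Sset τ).card / 2 := by
  have hsub : (Sset τ).filter (· < x) ⊆ (MinS τ).erase x := by
    intro y hy
    rw [mem_filter] at hy
    refine mem_erase.2 ⟨hy.2.ne, ?_⟩
    rcases lt_trichotomy y (τ y) with h | h | h
    · exact mem_filter.2 ⟨hy.1, h⟩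
    · exact absurd ((min_lt_fix hG hx (mem_filter.2 ⟨hy.1, h.symm⟩)).trans hy.2)
        (lt_irrefl x)
    · exact absurd ((min_lt_max hG hx (mem_filter.2 ⟨hy.1, h⟩)).trans hy.2) (lt_irrefl x)
  have h1 := card_le_card hsub
  rw [card_erase_of_mem hx] at h1
  have h2 : 0 < (MinS τ).card := card_pos.2 ⟨x, hx⟩
  have h3 := (MinS_card hτ hG).1
  unfold idxc
  omega

lemma idx_fix (hτ : Function.Involutive τ) (hG : ¬ Pat τ) {x : Fin n} (hx : x ∈ FixS τ) :
    idxc τ x = (Sset τ).card / 2 ∧ (Sset τ).card % 2 = 1 := by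
  have hfil : (Sset τ).filter (· < x) = MinS τ := by
    ext y
    rw [mem_filter]
    constructor
    · rintro ⟨hyS, hyx⟩
      rcases lt_trichotomy y (τ y) with h | h | h
      · exact mem_filter.2 ⟨hyS, h⟩
      · have := fix_eq_Av hG (mem_filter.2 ⟨hyS, h.symm⟩)
        rw [this, ← fix_eq_Av hG hx] at hyx
        exact absurd hyx (lt_irrefl x)
      · exact absurd ((fix_lt_max hG hx (mem_filter.2 ⟨hyS, h⟩)).trans hyx) (lt_irrefl x)
    · intro hy
      exact ⟨(mem_filter.1 hy).1, min_lt_fix hG hy hx⟩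
  have h1 : (FixS τ).card = 1 :=
    le_antisymm (FixS_card_le hG) (card_pos.2 ⟨x, hx⟩)
  have h2 := (MinS_card hτ hG).1
  have h3 := (MinS_card hτ hG).2
  refine ⟨?_, by omega⟩
  rw [idxc, hfil, h2]

lemma idx_max (hτ : Function.Involutive τ) (hG : ¬ Pat τ) {x : Fin n} (hx : x ∈ MaxS τ) :
    (Sset τ).card - (Sset τ).card / 2 ≤ idxc τ x := by
  have hsub : MinS τ ∪ FixS τ ⊆ (Sset τ).filter (· < x) := by
    intro y hy
    rcases mem_union.1 hy with h | h
    · exact mem_filter.2 ⟨(mem_filter.1 h).1, min_lt_max hG h hx⟩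
    · exact mem_filter.2 ⟨(mem_filter.1 h).1, fix_lt_max hG h hx⟩
  have hdisj1 : Disjoint (MinS τ) (FixS τ) := by
    rw [disjoint_left]
    intro a ha hb
    exact absurd rfl (min_lt_fix hG ha hb).ne
  have h1 := card_le_card hsub
  rw [card_union_of_disjoint hdisj1] at h1
  have h2 := (MinS_card hτ hG).1
  have h3 := (MinS_card hτ hG).2
  have h4 := Sset_card_split hτ hG
  unfold idxc
  omega

lemma mem_min_of_idx (hτ : Function.Involutive τ) (hG : ¬ Pat τ) {x : Fin n}
    (hx : x ∈ Sset τ) (h : idxc τ x < (Sset τ).card / 2) : x ∈ MinS τ := by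
  rcases lt_trichotomy x (τ x) with hc | hc | hc
  · exact mem_filter.2 ⟨hx, hc⟩
  · have := (idx_fix hτ hG (mem_filter.2 ⟨hx, hc.symm⟩)).1
    omega
  · have := idx_max hτ hG (mem_filter.2 ⟨hx, hc⟩)
    have hle : (Sset τ).card / 2 ≤ (Sset τ).card - (Sset τ).card / 2 := by omega
    omega

lemma mem_max_of_idx (hτ : Function.Involutive τ) (hG : ¬ Pat τ) {x : Fin n}
    (hx : x ∈ Sset τ) (h : (Sset τ).card - (Sset τ).card / 2 ≤ idxc τ x) : x ∈ MaxS τ := by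
  rcases lt_trichotomy x (τ x) with hc | hc | hc
  · have := idx_min hτ hG (mem_filter.2 ⟨hx, hc⟩)
    omega
  · have := idx_fix hτ hG (mem_filter.2 ⟨hx, hc.symm⟩)
    omega
  · exact mem_filter.2 ⟨hx, hc⟩

lemma mem_fix_of_idx (hτ : Function.Involutive τ) (hG : ¬ Pat τ) {x : Fin n}
    (hx : x ∈ Sset τ) (h1 : (Sset τ).card / 2 ≤ idxc τ x)
    (h2 : idxc τ x < (Sset τ).card - (Sset τ).card / 2) : x ∈ FixS τ := by
  rcases lt_trichotomy x (τ x) with hc | hc | hc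
  · have := idx_min hτ hG (mem_filter.2 ⟨hx, hc⟩)
    omega
  · exact mem_filter.2 ⟨hx, hc.symm⟩
  · have := idx_max hτ hG (mem_filter.2 ⟨hx, hc⟩)
    omega

end good
end withN

section build
variable {n : ℕ}

def Tset (n k : ℕ) : Finset (Fin n) := univ.filter fun x => k / 2 < (x : ℕ)

lemma jlt {k : ℕ} (hk1 : 1 ≤ k) (hkn : k ≤ n) : k / 2 < n := by omega

lemma Tset_card {k : ℕ} (h : k / 2 < n) : (Tset n k).card = n - k / 2 - 1 := by
  have : Tset n k = Finset.Ioi (⟨k / 2, h⟩ : Fin n) := by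
    ext x
    simp [Tset, Fin.lt_def]
  rw [this, Fin.card_Ioi]
  have hv : ((⟨k / 2, h⟩ : Fin n) : ℕ) = k / 2 := rfl
  omega

def padR {n k : ℕ} (t : Fin ((n - k) / 2)) : Fin (n - k) :=
  ⟨n - k - (n - k) / 2 + t, by have := t.isLt; omega⟩

def unpad {n k : ℕ} (t : Fin (n - k)) (h : n - k - (n - k) / 2 ≤ (t : ℕ)) :
    Fin ((n - k) / 2) :=
  ⟨(t : ℕ) - (n - k - (n - k) / 2), by have := t.isLt; omega⟩

variable (k : ℕ) (hk1 : 1 ≤ k) (hkn : k ≤ n) (S : Finset (Fin n))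
  (hsub : S ⊆ Tset n k) (hSc : S.card = n - k)

def jFin : Fin n := ⟨k / 2, jlt hk1 hkn⟩

def R'set : Finset (Fin n) :=
  if k % 2 = 0 then insert (jFin k hk1 hkn) (Tset n k \ S) else Tset n k \ S

lemma jFin_not_mem_sdiff : jFin k hk1 hkn ∉ Tset n k \ S := by
  intro h
  have := (mem_sdiff.1 h).1
  simp [Tset, jFin] at this

include hsub in
lemma mem_R'_ge {x : Fin n} (hx : x ∈ R'set k hk1 hkn S) : k / 2 ≤ (x : ℕ) ∧ x ∉ S := by
  have hsd : ∀ y : Fin n, y ∈ Tset n k \ S → k / 2 ≤ (y : ℕ) ∧ y ∉ S := by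
    intro y hy
    rw [mem_sdiff] at hy
    have := hy.1
    simp only [Tset, mem_filter] at this
    exact ⟨this.2.le, hy.2⟩
  rw [R'set] at hx
  split_ifs at hx with hpar
  · rcases mem_insert.1 hx with h | h
    · subst h
      refine ⟨le_refl _, fun hc => ?_⟩
      have := hsub hc
      simp [Tset, jFin] at this
    · exact hsd x h
  · exact hsd x hx

lemma mem_R'_of_gt {x : Fin n} (h1 : k / 2 < (x : ℕ)) (h2 : x ∉ S) :
    x ∈ R'set k hk1 hkn S := by
  have : x ∈ Tset n k \ S := mem_sdiff.2 ⟨by simp [Tset, h1], h2⟩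
  rw [R'set]
  split_ifs
  · exact mem_insert_of_mem this
  · exact this

lemma jFin_mem_R' : jFin k hk1 hkn ∈ R'set k hk1 hkn S ↔ k % 2 = 0 := by
  rw [R'set]
  split_ifs with hpar
  · exact iff_of_true (mem_insert_self _ _) hpar
  · exact iff_of_false (fun h => jFin_not_mem_sdiff k hk1 hkn S h) hpar

include hsub hSc in
lemma R'card :
    (R'set k hk1 hkn S).card = k / 2 := by
  have hsd : (Tset n k \ S).card = k - k / 2 - 1 := by
    rw [card_sdiff_of_subset hsub, Tset_card (jlt hk1 hkn), hSc]
    omega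
  rw [R'set]
  split_ifs with hpar
  · rw [card_insert_of_notMem (jFin_not_mem_sdiff k hk1 hkn S), hsd]
    omega
  · rw [hsd]
    have : k % 2 = 1 := by omega
    omega

variable (σ : Perm (Fin (k / 2))) (ρ : Perm (Fin ((n - k) / 2)))

def buildF : Fin n → Fin n := fun x =>
  if hx : (x : ℕ) < k / 2 then
    ((R'set k hk1 hkn S).orderIsoOfFin (R'card k hk1 hkn S hsub hSc) (σ ⟨x, hx⟩) : Fin n)
  else if hr : x ∈ R'set k hk1 hkn S then
    Fin.castLE (by omega : k / 2 ≤ n)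
      (σ.symm (((R'set k hk1 hkn S).orderIsoOfFin (R'card k hk1 hkn S hsub hSc)).symm ⟨x, hr⟩))
  else if hs : x ∈ S then
    (if hι : ((S.orderIsoOfFin hSc).symm ⟨x, hs⟩ : ℕ) < (n - k) / 2 then
      (S.orderIsoOfFin hSc (padR (ρ ⟨((S.orderIsoOfFin hSc).symm ⟨x, hs⟩ : ℕ), hι⟩)) : Fin n)
    else if hι2 : n - k - (n - k) / 2 ≤ ((S.orderIsoOfFin hSc).symm ⟨x, hs⟩ : ℕ) then
      (S.orderIsoOfFin hSc (Fin.castLE (Nat.div_le_self _ _)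
        (ρ.symm (unpad ((S.orderIsoOfFin hSc).symm ⟨x, hs⟩) hι2))) : Fin n)
    else x)
  else x

include hsub in
lemma mem_S_facts {x : Fin n} (hs : x ∈ S) :
    ¬ (x : ℕ) < k / 2 ∧ x ∉ R'set k hk1 hkn S := by
  have h1 : k / 2 < (x : ℕ) := by
    have := hsub hs
    simpa [Tset] using this
  exact ⟨by omega, fun hr => (mem_R'_ge k hk1 hkn S hsub hr).2 hs⟩

lemma buildF_lt {x : Fin n} (hx : (x : ℕ) < k / 2) :
    buildF k hk1 hkn S hsub hSc σ ρ x =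
      ((R'set k hk1 hkn S).orderIsoOfFin (R'card k hk1 hkn S hsub hSc) (σ ⟨x, hx⟩) : Fin n) :=
  dif_pos hx

lemma buildF_R' {x : Fin n} (hr : x ∈ R'set k hk1 hkn S) :
    buildF k hk1 hkn S hsub hSc σ ρ x =
      Fin.castLE (jlt hk1 hkn).le
        (σ.symm (((R'set k hk1 hkn S).orderIsoOfFin (R'card k hk1 hkn S hsub hSc)).symm
          ⟨x, hr⟩)) :=
  ((dif_neg (not_lt.2 (mem_R'_ge k hk1 hkn S hsub hr).1)).trans (dif_pos hr))

lemma buildF_S1 {x : Fin n} (hs : x ∈ S)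
    (hι : ((S.orderIsoOfFin hSc).symm ⟨x, hs⟩ : ℕ) < (n - k) / 2) :
    buildF k hk1 hkn S hsub hSc σ ρ x =
      (S.orderIsoOfFin hSc (padR (ρ ⟨((S.orderIsoOfFin hSc).symm ⟨x, hs⟩ : ℕ), hι⟩)) : Fin n) := by
  obtain ⟨h1, h2⟩ := mem_S_facts k hk1 hkn S hsub hs
  exact (dif_neg h1).trans ((dif_neg h2).trans ((dif_pos hs).trans (dif_pos hι)))

lemma buildF_S2 {x : Fin n} (hs : x ∈ S)
    (hι2 : n - k - (n - k) / 2 ≤ ((S.orderIsoOfFin hSc).symm ⟨x, hs⟩ : ℕ)) :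
    buildF k hk1 hkn S hsub hSc σ ρ x =
      (S.orderIsoOfFin hSc (Fin.castLE (Nat.div_le_self _ _)
        (ρ.symm (unpad ((S.orderIsoOfFin hSc).symm ⟨x, hs⟩) hι2))) : Fin n) := by
  obtain ⟨h1, h2⟩ := mem_S_facts k hk1 hkn S hsub hs
  have hno : ¬ ((S.orderIsoOfFin hSc).symm ⟨x, hs⟩ : ℕ) < (n - k) / 2 := by omega
  exact (dif_neg h1).trans ((dif_neg h2).trans ((dif_pos hs).trans
    ((dif_neg hno).trans (dif_pos hι2))))

lemma buildF_S3 {x : Fin n} (hs : x ∈ S)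
    (hm : (n - k) / 2 ≤ ((S.orderIsoOfFin hSc).symm ⟨x, hs⟩ : ℕ))
    (hd : ((S.orderIsoOfFin hSc).symm ⟨x, hs⟩ : ℕ) < n - k - (n - k) / 2) :
    buildF k hk1 hkn S hsub hSc σ ρ x = x := by
  obtain ⟨h1, h2⟩ := mem_S_facts k hk1 hkn S hsub hs
  exact (dif_neg h1).trans ((dif_neg h2).trans ((dif_pos hs).trans
    ((dif_neg (by omega)).trans (dif_neg (by omega)))))

lemma buildF_out {x : Fin n} (h1 : ¬ (x : ℕ) < k / 2) (h2 : x ∉ R'set k hk1 hkn S)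
    (h3 : x ∉ S) :
    buildF k hk1 hkn S hsub hSc σ ρ x = x :=
  (dif_neg h1).trans ((dif_neg h2).trans (dif_neg h3))

lemma unpad_val {t : Fin (n - k)} (h : n - k - (n - k) / 2 ≤ (t : ℕ)) :
    (unpad t h : ℕ) = (t : ℕ) - (n - k - (n - k) / 2) := rfl

lemma padR_val (t : Fin ((n - k) / 2)) :
    (padR t : ℕ) = n - k - (n - k) / 2 + (t : ℕ) := rfl

lemma buildF_invol : Function.Involutive (buildF k hk1 hkn S hsub hSc σ ρ) := by
  intro x
  set eR := (R'set k hk1 hkn S).orderIsoOfFin (R'card k hk1 hkn S hsub hSc) with heR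
  set eS := S.orderIsoOfFin hSc with heS
  by_cases hx : (x : ℕ) < k / 2
  · rw [buildF_lt k hk1 hkn S hsub hSc σ ρ hx]
    have hyR : ((eR (σ ⟨x, hx⟩)) : Fin n) ∈ R'set k hk1 hkn S := (eR (σ ⟨x, hx⟩)).2
    rw [buildF_R' k hk1 hkn S hsub hSc σ ρ hyR]
    have h1 : (⟨((eR (σ ⟨x, hx⟩)) : Fin n), hyR⟩ : {z // z ∈ R'set k hk1 hkn S}) =
        eR (σ ⟨x, hx⟩) := Subtype.ext rfl
    rw [h1, eR.symm_apply_apply, σ.symm_apply_apply]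
    exact Fin.ext rfl
  · by_cases hr : x ∈ R'set k hk1 hkn S
    · rw [buildF_R' k hk1 hkn S hsub hSc σ ρ hr]
      have hlt : ((Fin.castLE (jlt hk1 hkn).le (σ.symm (eR.symm ⟨x, hr⟩)) : Fin n) : ℕ)
          < k / 2 := (σ.symm (eR.symm ⟨x, hr⟩)).isLt
      rw [buildF_lt k hk1 hkn S hsub hSc σ ρ hlt]
      have h2 : (⟨((Fin.castLE (jlt hk1 hkn).le (σ.symm (eR.symm ⟨x, hr⟩)) : Fin n) : ℕ),
          hlt⟩ : Fin (k / 2)) = σ.symm (eR.symm ⟨x, hr⟩) := Fin.ext rfl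
      rw [h2, σ.apply_symm_apply, eR.apply_symm_apply]
    · by_cases hs : x ∈ S
      · by_cases hι : ((eS.symm ⟨x, hs⟩ : Fin (n - k)) : ℕ) < (n - k) / 2
        · rw [buildF_S1 k hk1 hkn S hsub hSc σ ρ hs hι]
          set y : Fin n := (eS (padR (ρ ⟨((eS.symm ⟨x, hs⟩ : Fin (n - k)) : ℕ), hι⟩)) : Fin n)
            with hy
          have hyS : y ∈ S := (eS _).2
          have hiy : (eS.symm ⟨y, hyS⟩ : Fin (n - k)) =
              padR (ρ ⟨((eS.symm ⟨x, hs⟩ : Fin (n - k)) : ℕ), hι⟩) := by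
            have h0 : (⟨y, hyS⟩ : {z // z ∈ S}) =
                eS (padR (ρ ⟨((eS.symm ⟨x, hs⟩ : Fin (n - k)) : ℕ), hι⟩)) := Subtype.ext hy
            rw [h0, eS.symm_apply_apply]
          have hd : n - k - (n - k) / 2 ≤ ((eS.symm ⟨y, hyS⟩ : Fin (n - k)) : ℕ) := by
            rw [hiy, padR_val]
            omega
          rw [buildF_S2 k hk1 hkn S hsub hSc σ ρ hyS hd]
          have h3 : unpad (eS.symm ⟨y, hyS⟩) hd =
              ρ ⟨((eS.symm ⟨x, hs⟩ : Fin (n - k)) : ℕ), hι⟩ := by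
            apply Fin.ext
            rw [unpad_val]
            have := congrArg Fin.val hiy
            rw [this, padR_val]
            omega
          rw [h3, ρ.symm_apply_apply]
          have h4 : Fin.castLE (Nat.div_le_self _ _)
              (⟨((eS.symm ⟨x, hs⟩ : Fin (n - k)) : ℕ), hι⟩ : Fin ((n - k) / 2)) =
              (eS.symm ⟨x, hs⟩ : Fin (n - k)) := Fin.ext rfl
          rw [h4, eS.apply_symm_apply]
        · by_cases hι2 : n - k - (n - k) / 2 ≤ ((eS.symm ⟨x, hs⟩ : Fin (n - k)) : ℕ)
          · rw [buildF_S2 k hk1 hkn S hsub hSc σ ρ hs hι2]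
            set t := ρ.symm (unpad (eS.symm ⟨x, hs⟩) hι2) with ht
            set y : Fin n := (eS (Fin.castLE (Nat.div_le_self _ _) t) : Fin n) with hy
            have hyS : y ∈ S := (eS _).2
            have hiy : (eS.symm ⟨y, hyS⟩ : Fin (n - k)) = Fin.castLE (Nat.div_le_self _ _) t := by
              have h0 : (⟨y, hyS⟩ : {z // z ∈ S}) =
                  eS (Fin.castLE (Nat.div_le_self _ _) t) := Subtype.ext hy
              rw [h0, eS.symm_apply_apply]
            have hm : ((eS.symm ⟨y, hyS⟩ : Fin (n - k)) : ℕ) < (n - k) / 2 := by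
              rw [hiy]
              exact t.isLt
            rw [buildF_S1 k hk1 hkn S hsub hSc σ ρ hyS hm]
            have h3 : (⟨((eS.symm ⟨y, hyS⟩ : Fin (n - k)) : ℕ), hm⟩ : Fin ((n - k) / 2)) = t :=
              Fin.ext (by
                show ((eS.symm ⟨y, hyS⟩ : Fin (n - k)) : ℕ) = (t : ℕ)
                rw [hiy]; rfl)
            rw [h3, ht, ρ.apply_symm_apply]
            have h4 : padR (unpad (eS.symm ⟨x, hs⟩) hι2) = (eS.symm ⟨x, hs⟩ : Fin (n - k)) := by
              apply Fin.ext
              rw [padR_val, unpad_val]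
              omega
            rw [h4, eS.apply_symm_apply]
          · rw [buildF_S3 k hk1 hkn S hsub hSc σ ρ hs (by rw [← heS]; omega)
                (by rw [← heS]; omega),
              buildF_S3 k hk1 hkn S hsub hSc σ ρ hs (by rw [← heS]; omega)
                (by rw [← heS]; omega)]
      · rw [buildF_out k hk1 hkn S hsub hSc σ ρ hx hr hs,
          buildF_out k hk1 hkn S hsub hSc σ ρ hx hr hs]

def buildPerm : Perm (Fin n) :=
  Function.Involutive.toPerm _ (buildF_invol k hk1 hkn S hsub hSc σ ρ)

lemma buildPerm_coe : ⇑(buildPerm k hk1 hkn S hsub hSc σ ρ) = buildF k hk1 hkn S hsub hSc σ ρ :=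
  rfl

lemma buildF_S_mem {x : Fin n} (hs : x ∈ S) :
    buildF k hk1 hkn S hsub hSc σ ρ x ∈ S := by
  set eS := S.orderIsoOfFin hSc with heS
  by_cases hι : ((eS.symm ⟨x, hs⟩ : Fin (n - k)) : ℕ) < (n - k) / 2
  · rw [buildF_S1 k hk1 hkn S hsub hSc σ ρ hs hι]
    exact (eS _).2
  · by_cases hι2 : n - k - (n - k) / 2 ≤ ((eS.symm ⟨x, hs⟩ : Fin (n - k)) : ℕ)
    · rw [buildF_S2 k hk1 hkn S hsub hSc σ ρ hs hι2]
      exact (eS _).2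
    · rw [buildF_S3 k hk1 hkn S hsub hSc σ ρ hs (by rw [← heS]; omega) (by rw [← heS]; omega)]
      exact hs

lemma buildF_lt_val {x : Fin n} (hx : (x : ℕ) < k / 2) :
    k / 2 ≤ (buildF k hk1 hkn S hsub hSc σ ρ x : ℕ) := by
  rw [buildF_lt k hk1 hkn S hsub hSc σ ρ hx]
  exact (mem_R'_ge k hk1 hkn S hsub (((R'set k hk1 hkn S).orderIsoOfFin
    (R'card k hk1 hkn S hsub hSc)) (σ ⟨x, hx⟩)).2).1

section withNZ
variable [NeZero n]

lemma buildPerm_Bv : Bv (buildPerm k hk1 hkn S hsub hSc σ ρ) = jFin k hk1 hkn := by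
  apply le_antisymm
  · refine (Bv_le _ (jFin k hk1 hkn)).trans ?_
    have hj : ¬ ((jFin k hk1 hkn : Fin n) : ℕ) < k / 2 := by simp [jFin]
    by_cases hpar : k % 2 = 0
    · have hr : jFin k hk1 hkn ∈ R'set k hk1 hkn S := (jFin_mem_R' k hk1 hkn S).2 hpar
      have hle : buildPerm k hk1 hkn S hsub hSc σ ρ (jFin k hk1 hkn) ≤ jFin k hk1 hkn := by
        rw [buildPerm_coe, buildF_R' k hk1 hkn S hsub hSc σ ρ hr]
        rw [Fin.le_def]
        have hlt := (σ.symm (((R'set k hk1 hkn S).orderIsoOfFin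
          (R'card k hk1 hkn S hsub hSc)).symm ⟨jFin k hk1 hkn, hr⟩)).isLt
        have hjv : ((jFin k hk1 hkn : Fin n) : ℕ) = k / 2 := rfl
        simp only [Fin.coe_castLE]
        omega
      rw [cmax, max_eq_left hle]
    · have hr : jFin k hk1 hkn ∉ R'set k hk1 hkn S := fun h =>
        hpar ((jFin_mem_R' k hk1 hkn S).1 h)
      have hsn : jFin k hk1 hkn ∉ S := fun h => by
        have := hsub h
        simp [Tset, jFin] at this
      rw [cmax, buildPerm_coe, buildF_out k hk1 hkn S hsub hSc σ ρ hj hr hsn, max_self]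
  · apply Finset.le_inf'
    intro x _
    rcases lt_or_ge (x : ℕ) (k / 2) with hx | hx
    · refine le_trans ?_ (le_max_right _ _)
      rw [Fin.le_def]
      exact (buildF_lt_val k hk1 hkn S hsub hSc σ ρ hx).trans_eq rfl
    · exact le_trans (by rw [Fin.le_def]; exact hx) (le_max_left _ _)

lemma buildPerm_Sset : Sset (buildPerm k hk1 hkn S hsub hSc σ ρ) = S := by
  ext x
  rw [mem_Sset_iff, buildPerm_Bv k hk1 hkn S hsub hSc σ ρ]
  constructor
  · rintro ⟨h1, h2⟩
    by_contra hs
    have hjv : ((jFin k hk1 hkn : Fin n) : ℕ) = k / 2 := rfl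
    rcases lt_or_ge (x : ℕ) (k / 2) with hx | hx
    · rw [Fin.lt_def] at h1
      omega
    · by_cases hr : x ∈ R'set k hk1 hkn S
      · rw [buildPerm_coe, buildF_R' k hk1 hkn S hsub hSc σ ρ hr, Fin.lt_def] at h2
        have := (σ.symm (((R'set k hk1 hkn S).orderIsoOfFin
          (R'card k hk1 hkn S hsub hSc)).symm ⟨x, hr⟩)).isLt
        simp only [Fin.coe_castLE] at h2
        omega
      · -- x ∉ R', ∉ S, val ≥ k/2 : then val = k/2
        have hval : (x : ℕ) = k / 2 := by
          by_contra hne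
          exact hr (mem_R'_of_gt k hk1 hkn S (by omega) hs)
        rw [Fin.lt_def] at h1
        omega
  · intro hs
    have h1 : (jFin k hk1 hkn : Fin n) < x := by
      rw [Fin.lt_def]
      have := hsub hs
      simpa [Tset, jFin] using this
    refine ⟨h1, ?_⟩
    have hmem : buildPerm k hk1 hkn S hsub hSc σ ρ x ∈ S := by
      rw [buildPerm_coe]
      exact buildF_S_mem k hk1 hkn S hsub hSc σ ρ hs
    rw [Fin.lt_def]
    have := hsub hmem
    simpa [Tset, jFin] using this

lemma buildPerm_stat : stat (buildPerm k hk1 hkn S hsub hSc σ ρ) = k := by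
  have h1 := Sset_card (buildPerm k hk1 hkn S hsub hSc σ ρ)
  rw [buildPerm_Sset k hk1 hkn S hsub hSc σ ρ, hSc] at h1
  have h2 : stat (buildPerm k hk1 hkn S hsub hSc σ ρ) ≤ n := by
    rw [stat]
    exact (card_filter_le _ _).trans (by simp)
  omega

lemma buildPerm_good : ¬ Pat (buildPerm k hk1 hkn S hsub hSc σ ρ) := by
  rw [good_iff]
  intro x
  set τb := buildPerm k hk1 hkn S hsub hSc σ ρ with hτb
  by_cases hs : x ∈ S
  · right
    set eS := S.orderIsoOfFin hSc with heS
    have hN : 1 ≤ n - k := by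
      have : 0 < S.card := card_pos.2 ⟨x, hs⟩
      omega
    have hd1 : n - k - (n - k) / 2 - 1 < n - k := by omega
    set w : Fin n := (eS ⟨n - k - (n - k) / 2 - 1, hd1⟩ : Fin n) with hw
    have hwS : w ∈ S := (eS _).2
    have hwv : ((⟨n - k - (n - k) / 2 - 1, hd1⟩ : Fin (n - k)) : ℕ) =
      n - k - (n - k) / 2 - 1 := rfl
    have hjw : (jFin k hk1 hkn : Fin n) < w := by
      rw [Fin.lt_def]
      have := hsub hwS
      simpa [Tset, jFin] using this
    have mono : ∀ a b : Fin (n - k), (a : ℕ) ≤ (b : ℕ) → ((eS a : Fin n) : ℕ) ≤ (eS b : Fin n) := by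
      intro a b hab
      exact Subtype.coe_le_coe.2 (eS.le_iff_le.2 hab)
    -- Step 1 : every cmin is ≤ w
    have step1 : ∀ y, cmin τb y ≤ w := by
      intro y
      by_cases hy : y ∈ S
      · -- y ∈ S
        by_cases hι : ((eS.symm ⟨y, hy⟩ : Fin (n - k)) : ℕ) < (n - k) / 2
        · refine le_trans (min_le_left _ _) ?_
          have hye : y = (eS (eS.symm ⟨y, hy⟩) : Fin n) := by rw [eS.apply_symm_apply]
          rw [Fin.le_def, hye]
          exact mono _ _ (by omega)
        · by_cases hι2 : n - k - (n - k) / 2 ≤ ((eS.symm ⟨y, hy⟩ : Fin (n - k)) : ℕ)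
          · refine le_trans (min_le_right _ _) ?_
            rw [hτb, buildPerm_coe, buildF_S2 k hk1 hkn S hsub hSc σ ρ hy hι2, Fin.le_def]
            have hval := (ρ.symm (unpad (eS.symm ⟨y, hy⟩) hι2)).isLt
            exact mono _ _ (by simp only [Fin.coe_castLE]; omega)
          · refine le_trans (min_le_left _ _) ?_
            have hye : y = (eS (eS.symm ⟨y, hy⟩) : Fin n) := by rw [eS.apply_symm_apply]
            rw [Fin.le_def, hye]
            exact mono _ _ (by omega)
      · -- y ∉ S : cmin y ≤ Bv = jFin < w
        have hnlt : ¬ (Bv τb < cmin τb y) := by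
          intro hc
          apply hy
          rw [← buildPerm_Sset k hk1 hkn S hsub hSc σ ρ, Sset, mem_filter]
          exact ⟨mem_univ _, hc⟩
        push_neg at hnlt
        refine le_trans hnlt ?_
        rw [hτb, buildPerm_Bv k hk1 hkn S hsub hSc σ ρ]
        exact hjw.le
    -- Step 2 : w ≤ cmax τb x
    have step2 : w ≤ cmax τb x := by
      by_cases hι : ((eS.symm ⟨x, hs⟩ : Fin (n - k)) : ℕ) < (n - k) / 2
      · refine le_trans ?_ (le_max_right _ _)
        rw [hτb, buildPerm_coe, buildF_S1 k hk1 hkn S hsub hSc σ ρ hs hι, Fin.le_def]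
        exact mono _ _ (by rw [padR_val]; omega)
      · refine le_trans ?_ (le_max_left _ _)
        have hxe : x = (eS (eS.symm ⟨x, hs⟩) : Fin n) := by rw [eS.apply_symm_apply]
        rw [Fin.le_def, hxe]
        exact mono _ _ (by omega)
    exact le_trans (Finset.sup'_le _ _ fun y _ => step1 y) step2
  · left
    have hnlt : ¬ (Bv τb < cmin τb x) := by
      intro hc
      apply hs
      rw [← buildPerm_Sset k hk1 hkn S hsub hSc σ ρ, Sset, mem_filter]
      exact ⟨mem_univ _, hc⟩
    push_neg at hnlt
    exact hnlt

end withNZ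
end build

section surj
variable {n : ℕ} [NeZero n] {τ : Perm (Fin n)}

lemma Bv_of_stat (hτ : Function.Involutive τ) {k : ℕ} (hstat : stat τ = k) :
    ((Bv τ : Fin n) : ℕ) = k / 2 ∧ (τ (Bv τ) = Bv τ ↔ k % 2 = 1) := by
  have hss := stat_spec hτ
  rw [hstat] at hss
  split_ifs at hss with hfix
  · exact ⟨by omega, iff_of_true hfix (by omega)⟩
  · exact ⟨by omega, iff_of_false hfix (by omega)⟩

lemma build_surj {k : ℕ} (hk1 : 1 ≤ k) (hkn : k ≤ n)
    (hτ : Function.Involutive τ) (hG : ¬ Pat τ) (hstat : stat τ = k) :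
    ∃ (S : Finset (Fin n)) (hsub : S ⊆ Tset n k) (hSc : S.card = n - k)
      (σ : Perm (Fin (k / 2))) (ρ : Perm (Fin ((n - k) / 2))),
        buildPerm k hk1 hkn S hsub hSc σ ρ = τ := by
  obtain ⟨hB, hpar⟩ := Bv_of_stat hτ hstat
  set S := Sset τ with hSdef
  have hsub : S ⊆ Tset n k := by
    intro x hx
    rw [hSdef, Sset, mem_filter] at hx
    have h1 : cmin τ x ≤ x := min_le_left _ _
    have h2 : Bv τ < x := lt_of_lt_of_le hx.2 h1
    rw [Fin.lt_def, hB] at h2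
    simp [Tset, h2]
  have hSc : S.card = n - k := by rw [hSdef, Sset_card, hstat]
  have hstatn : k ≤ n := hkn
  set eR := (R'set k hk1 hkn S).orderIsoOfFin (R'card k hk1 hkn S hsub hSc) with heR
  set eS := S.orderIsoOfFin hSc with heS
  -- facts about the left family
  have hcastlt : ∀ i : Fin (k / 2), (Fin.castLE (jlt hk1 hkn).le i : Fin n) < Bv τ := by
    intro i
    rw [Fin.lt_def, hB]
    exact i.isLt
  have f1 : ∀ i : Fin (k / 2), τ (Fin.castLE (jlt hk1 hkn).le i) ∈ R'set k hk1 hkn S := by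
    intro i
    set x : Fin n := Fin.castLE (jlt hk1 hkn).le i with hxdef
    have hlt := hcastlt i
    obtain ⟨hxτ, hBτ⟩ := lt_Bv_lt hlt
    have hns : τ x ∉ S := by
      rw [hSdef, Sset, mem_filter]
      rintro ⟨-, hc⟩
      rw [cmin_tau hτ] at hc
      exact absurd ((min_le_left _ _).trans_lt' hc) (not_lt.2 hlt.le)
    have hge : k / 2 ≤ (τ x : ℕ) := by
      rw [← hB]
      exact hBτ
    rcases eq_or_lt_of_le hge with heq | hgt
    · -- τ x = Bv τ, so k is even
      have hxB : τ x = Bv τ := Fin.ext (by rw [← heq]; exact hB.symm)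
      have hkeven : k % 2 = 0 := by
        by_contra hodd
        have : k % 2 = 1 := by omega
        have hfix := hpar.2 this
        have : x = Bv τ := by
          rw [← hfix, ← hxB, hτ x]
        exact absurd (this ▸ hlt) (lt_irrefl _)
      have : τ x = jFin k hk1 hkn := Fin.ext (by rw [← heq]; rfl)
      rw [this]
      exact (jFin_mem_R' k hk1 hkn S).2 hkeven
    · exact mem_R'_of_gt k hk1 hkn S hgt hns
  have hgσinj : Function.Injective
      (fun i : Fin (k / 2) => eR.symm ⟨τ (Fin.castLE (jlt hk1 hkn).le i), f1 i⟩) := by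
    intro i₁ i₂ h
    have h2 := congrArg (fun z => ((eR z : Fin n))) h
    simp only [eR.apply_symm_apply] at h2
    have h3 : τ (Fin.castLE (jlt hk1 hkn).le i₁) = τ (Fin.castLE (jlt hk1 hkn).le i₂) := h2
    have h4 := τ.injective h3
    exact Fin.castLE_injective _ h4
  set σ : Perm (Fin (k / 2)) := Equiv.ofBijective _
    (Finite.injective_iff_bijective.1 hgσinj) with hσ
  have hσap : ∀ i, σ i = eR.symm ⟨τ (Fin.castLE (jlt hk1 hkn).le i), f1 i⟩ := fun i => rfl
  -- facts about the right family
  have hmemS : ∀ t : Fin ((n - k) / 2),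
      τ ((eS (Fin.castLE (Nat.div_le_self _ _) t)) : Fin n) ∈ S := by
    intro t
    exact tau_mem_Sset hτ ((eS _).2)
  have hminS : ∀ t : Fin ((n - k) / 2),
      ((eS (Fin.castLE (Nat.div_le_self _ _) t)) : Fin n) ∈ MinS τ := by
    intro t
    set x : Fin n := (eS (Fin.castLE (Nat.div_le_self _ _) t) : Fin n) with hx
    have hxS : x ∈ S := (eS _).2
    apply mem_min_of_idx hτ hG hxS
    have hidx : idxc τ x = ((Fin.castLE (Nat.div_le_self ((n-k)) 2) t : Fin (n - k)) : ℕ) := by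
      rw [idxc, ← orderIso_idx hSc hxS]
      congr 1
      have h0 : (⟨x, hxS⟩ : {z // z ∈ S}) = eS (Fin.castLE (Nat.div_le_self _ _) t) :=
        Subtype.ext hx
      rw [h0, eS.symm_apply_apply]
    rw [← hSdef, hSc, hidx]
    exact t.isLt
  have hidxmax : ∀ t : Fin ((n - k) / 2),
      n - k - (n - k) / 2 ≤ ((eS.symm ⟨τ ((eS (Fin.castLE (Nat.div_le_self _ _) t)) : Fin n),
        hmemS t⟩ : Fin (n - k)) : ℕ) := by
    intro t
    have hτxmax : τ ((eS (Fin.castLE (Nat.div_le_self _ _) t)) : Fin n) ∈ MaxS τ := by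
      rw [MaxS_eq_image hτ]
      exact mem_image_of_mem τ (hminS t)
    have h1 := idx_max hτ hG hτxmax
    rw [← hSdef, hSc] at h1
    have h2 : ((eS.symm ⟨τ ((eS (Fin.castLE (Nat.div_le_self _ _) t)) : Fin n), hmemS t⟩ :
        Fin (n - k)) : ℕ) =
        idxc τ (τ ((eS (Fin.castLE (Nat.div_le_self _ _) t)) : Fin n)) := by
      rw [idxc, ← hSdef, orderIso_idx hSc (hmemS t)]
    omega
  have hgρinj : Function.Injective (fun t : Fin ((n - k) / 2) =>
      (⟨((eS.symm ⟨τ ((eS (Fin.castLE (Nat.div_le_self _ _) t)) : Fin n), hmemS t⟩ :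
          Fin (n - k)) : ℕ) - (n - k - (n - k) / 2),
        by have h1 := (eS.symm ⟨τ ((eS (Fin.castLE (Nat.div_le_self _ _) t)) : Fin n),
            hmemS t⟩).isLt
           have h2 := t.isLt
           omega⟩ : Fin ((n - k) / 2))) := by
    intro t₁ t₂ h
    have hv := congrArg Fin.val h
    simp only at hv
    have h1 := hidxmax t₁
    have h2 := hidxmax t₂
    have h3 : ((eS.symm ⟨τ ((eS (Fin.castLE (Nat.div_le_self _ _) t₁)) : Fin n), hmemS t₁⟩ :
        Fin (n - k)) : ℕ) = ((eS.symm ⟨τ ((eS (Fin.castLE (Nat.div_le_self _ _) t₂)) : Fin n),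
        hmemS t₂⟩ : Fin (n - k)) : ℕ) := by omega
    have h4 := congrArg (fun z => ((eS z : Fin n))) (Fin.ext h3 :
      (eS.symm ⟨τ ((eS (Fin.castLE (Nat.div_le_self _ _) t₁)) : Fin n), hmemS t₁⟩) =
      (eS.symm ⟨τ ((eS (Fin.castLE (Nat.div_le_self _ _) t₂)) : Fin n), hmemS t₂⟩))
    simp only [eS.apply_symm_apply] at h4
    have h5 := τ.injective (h4 : τ _ = τ _)
    have h6 : (eS (Fin.castLE (Nat.div_le_self _ _) t₁)) =
        (eS (Fin.castLE (Nat.div_le_self _ _) t₂)) := Subtype.ext h5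
    have h7 := eS.injective h6
    exact Fin.castLE_injective _ h7
  set ρ : Perm (Fin ((n - k) / 2)) := Equiv.ofBijective _
    (Finite.injective_iff_bijective.1 hgρinj) with hρ
  have hρap : ∀ t, ρ t =
      (⟨((eS.symm ⟨τ ((eS (Fin.castLE (Nat.div_le_self _ _) t)) : Fin n), hmemS t⟩ :
          Fin (n - k)) : ℕ) - (n - k - (n - k) / 2),
        by have h1 := (eS.symm ⟨τ ((eS (Fin.castLE (Nat.div_le_self _ _) t)) : Fin n),
            hmemS t⟩).isLt
           have h2 := t.isLt
           omega⟩ : Fin ((n - k) / 2)) := fun t => rfl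
  refine ⟨S, hsub, hSc, σ, ρ, ?_⟩
  apply Equiv.ext
  intro x
  rw [buildPerm_coe]
  by_cases hx : (x : ℕ) < k / 2
  · rw [buildF_lt k hk1 hkn S hsub hSc σ ρ hx, ← heR, hσap ⟨(x : ℕ), hx⟩,
      eR.apply_symm_apply]
    have hc : (Fin.castLE (jlt hk1 hkn).le (⟨(x : ℕ), hx⟩ : Fin (k / 2))) = x := Fin.ext rfl
    show τ (Fin.castLE (jlt hk1 hkn).le (⟨(x : ℕ), hx⟩ : Fin (k / 2))) = τ x
    rw [hc]
  · by_cases hr : x ∈ R'set k hk1 hkn S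
    · have hge := mem_R'_ge k hk1 hkn S hsub hr
      have hτx : (τ x : ℕ) < k / 2 := by
        rcases eq_or_lt_of_le hge.1 with heq | hgt
        · have hxB : x = Bv τ := Fin.ext (by rw [hB, ← heq])
          have hkeven : k % 2 = 0 := by
            by_contra h
            have hodd : k % 2 = 1 := by omega
            have hfix := hpar.2 hodd
            rw [hxB] at hr
            have : jFin k hk1 hkn = Bv τ := Fin.ext (by show k / 2 = _; rw [hB])
            rw [← this] at hr
            have := (jFin_mem_R' k hk1 hkn S).1 hr
            omega
          have hne : τ (Bv τ) ≠ Bv τ := fun hc => by have := hpar.1 hc; omega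
          have hlt : τ (Bv τ) < Bv τ := lt_of_le_of_ne (tauBv_le hτ) hne
          rw [hxB]
          rw [Fin.lt_def, hB] at hlt
          exact hlt
        · have hxgt : Bv τ < x := by rw [Fin.lt_def, hB]; exact hgt
          have hns := hge.2
          have hcm : cmin τ x ≤ Bv τ := by
            by_contra hc
            apply hns
            rw [hSdef, Sset, mem_filter]
            exact ⟨mem_univ _, not_le.1 hc⟩
          have hmin : cmin τ x = τ x := by
            rcases le_total x (τ x) with h | h
            · rw [cmin, min_eq_left h] at hcm
              exact absurd hxgt (not_lt.2 hcm)
            · exact min_eq_right h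
          have hτle : τ x ≤ Bv τ := hmin ▸ hcm
          have hne : τ x ≠ Bv τ := by
            intro hc
            have hxb : x = τ (Bv τ) := by rw [← hc, hτ x]
            have := tauBv_le hτ
            rw [← hxb] at this
            exact absurd hxgt (not_lt.2 this)
          have hfin : τ x < Bv τ := lt_of_le_of_ne hτle hne
          rw [Fin.lt_def, hB] at hfin
          exact hfin
      rw [buildF_R' k hk1 hkn S hsub hSc σ ρ hr, ← heR]
      have h2 : σ ⟨(τ x : ℕ), hτx⟩ = eR.symm ⟨x, hr⟩ := by
        rw [hσap ⟨(τ x : ℕ), hτx⟩]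
        congr 1
        apply Subtype.ext
        show τ (Fin.castLE (jlt hk1 hkn).le (⟨(τ x : ℕ), hτx⟩ : Fin (k / 2))) = x
        have hc : (Fin.castLE (jlt hk1 hkn).le (⟨(τ x : ℕ), hτx⟩ : Fin (k / 2))) = τ x :=
          Fin.ext rfl
        rw [hc, hτ x]
      rw [← h2, σ.symm_apply_apply]
      exact Fin.ext rfl
    · by_cases hs : x ∈ S
      · have hτmem : τ x ∈ S := tau_mem_Sset hτ hs
        have hidxx : idxc τ x = ((eS.symm ⟨x, hs⟩ : Fin (n - k)) : ℕ) := by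
          rw [idxc, ← hSdef, ← orderIso_idx hSc hs, heS]
        have hidxτ : ((eS.symm ⟨τ x, hτmem⟩ : Fin (n - k)) : ℕ) = idxc τ (τ x) := by
          rw [idxc, ← hSdef, heS]
          exact orderIso_idx hSc hτmem
        by_cases hι : ((eS.symm ⟨x, hs⟩ : Fin (n - k)) : ℕ) < (n - k) / 2
        · have hxmin : x ∈ MinS τ := by
            apply mem_min_of_idx hτ hG hs
            rw [hidxx, ← hSdef, hSc]
            exact hι
          have hτmax : τ x ∈ MaxS τ := by
            rw [MaxS_eq_image hτ]
            exact mem_image_of_mem τ hxmin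
          have hidxge : n - k - (n - k) / 2 ≤ ((eS.symm ⟨τ x, hτmem⟩ : Fin (n - k)) : ℕ) := by
            have h1 := idx_max hτ hG hτmax
            rw [← hSdef, hSc] at h1
            omega
          rw [buildF_S1 k hk1 hkn S hsub hSc σ ρ hs hι]
          show ((eS (padR (ρ ⟨((eS.symm ⟨x, hs⟩ : Fin (n - k)) : ℕ), hι⟩))) : Fin n) = τ x
          have hρval : ρ ⟨((eS.symm ⟨x, hs⟩ : Fin (n - k)) : ℕ), hι⟩ =
              ⟨((eS.symm ⟨τ x, hτmem⟩ : Fin (n - k)) : ℕ) - (n - k - (n - k) / 2),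
                by have h1 := (eS.symm ⟨τ x, hτmem⟩).isLt; omega⟩ := by
            rw [hρap ⟨((eS.symm ⟨x, hs⟩ : Fin (n - k)) : ℕ), hι⟩]
            apply Fin.ext
            have hc : Fin.castLE (Nat.div_le_self _ _)
                (⟨((eS.symm ⟨x, hs⟩ : Fin (n - k)) : ℕ), hι⟩ : Fin ((n - k) / 2)) =
                eS.symm ⟨x, hs⟩ := Fin.ext rfl
            have harg : (⟨τ ((eS (Fin.castLE (Nat.div_le_self _ _)
                (⟨((eS.symm ⟨x, hs⟩ : Fin (n - k)) : ℕ), hι⟩ : Fin ((n - k) / 2)))) : Fin n),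
                hmemS _⟩ : {z // z ∈ S}) = ⟨τ x, hτmem⟩ := by
              apply Subtype.ext
              show τ _ = τ x
              rw [hc, eS.apply_symm_apply]
            simp only [harg]
          rw [hρval]
          have hpad : padR (⟨((eS.symm ⟨τ x, hτmem⟩ : Fin (n - k)) : ℕ) - (n - k - (n - k) / 2),
              by have h1 := (eS.symm ⟨τ x, hτmem⟩).isLt; omega⟩ : Fin ((n - k) / 2)) =
              eS.symm ⟨τ x, hτmem⟩ := by
            apply Fin.ext
            rw [padR_val]
            show n - k - (n - k) / 2 +
              (((eS.symm ⟨τ x, hτmem⟩ : Fin (n - k)) : ℕ) - (n - k - (n - k) / 2)) = _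
            omega
          rw [hpad, eS.apply_symm_apply]
        · by_cases hι2 : n - k - (n - k) / 2 ≤ ((eS.symm ⟨x, hs⟩ : Fin (n - k)) : ℕ)
          · have hxmax : x ∈ MaxS τ := by
              apply mem_max_of_idx hτ hG hs
              rw [hidxx, ← hSdef, hSc]
              exact hι2
            have hτmin : τ x ∈ MinS τ := by
              refine mem_filter.2 ⟨tau_mem_Sset hτ hs, ?_⟩
              rw [hτ x]
              exact (mem_filter.1 hxmax).2
            have hidxτlt : ((eS.symm ⟨τ x, hτmem⟩ : Fin (n - k)) : ℕ) < (n - k) / 2 := by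
              have h1 := idx_min hτ hG hτmin
              rw [← hSdef, hSc] at h1
              omega
            rw [buildF_S2 k hk1 hkn S hsub hSc σ ρ hs hι2]
            show ((eS (Fin.castLE (Nat.div_le_self _ _)
              (ρ.symm (unpad (eS.symm ⟨x, hs⟩) hι2)))) : Fin n) = τ x
            have hkey : ρ ⟨((eS.symm ⟨τ x, hτmem⟩ : Fin (n - k)) : ℕ), hidxτlt⟩ =
                unpad (eS.symm ⟨x, hs⟩) hι2 := by
              rw [hρap ⟨((eS.symm ⟨τ x, hτmem⟩ : Fin (n - k)) : ℕ), hidxτlt⟩]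
              apply Fin.ext
              have hc : Fin.castLE (Nat.div_le_self _ _)
                  (⟨((eS.symm ⟨τ x, hτmem⟩ : Fin (n - k)) : ℕ), hidxτlt⟩ : Fin ((n - k) / 2)) =
                  eS.symm ⟨τ x, hτmem⟩ := Fin.ext rfl
              have harg : (⟨τ ((eS (Fin.castLE (Nat.div_le_self _ _)
                  (⟨((eS.symm ⟨τ x, hτmem⟩ : Fin (n - k)) : ℕ), hidxτlt⟩ : Fin ((n - k) / 2)))) :
                  Fin n), hmemS _⟩ : {z // z ∈ S}) = ⟨x, hs⟩ := by
                apply Subtype.ext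
                show τ _ = x
                rw [hc, eS.apply_symm_apply]
                exact hτ x
              rw [unpad_val]; simp only [harg]
            have hsymm : ρ.symm (unpad (eS.symm ⟨x, hs⟩) hι2) =
                ⟨((eS.symm ⟨τ x, hτmem⟩ : Fin (n - k)) : ℕ), hidxτlt⟩ := by
              rw [← hkey, ρ.symm_apply_apply]
            rw [hsymm]
            have hc2 : Fin.castLE (Nat.div_le_self _ _)
                (⟨((eS.symm ⟨τ x, hτmem⟩ : Fin (n - k)) : ℕ), hidxτlt⟩ : Fin ((n - k) / 2)) =
                eS.symm ⟨τ x, hτmem⟩ := Fin.ext rfl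
            rw [hc2, eS.apply_symm_apply]
          · have hxfix : x ∈ FixS τ := by
              apply mem_fix_of_idx hτ hG hs
              · rw [hidxx, ← hSdef, hSc]
                omega
              · rw [hidxx, ← hSdef, hSc]
                omega
            rw [buildF_S3 k hk1 hkn S hsub hSc σ ρ hs (by rw [heS] at hι; omega)
              (by rw [heS] at hι2; omega)]
            exact ((mem_filter.1 hxfix).2).symm
      · have hveq : (x : ℕ) = k / 2 := by
          by_contra hne
          exact hr (mem_R'_of_gt k hk1 hkn S (by omega) hs)
        have hxB : x = Bv τ := Fin.ext (by rw [hB, hveq])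
        have hkodd : k % 2 = 1 := by
          by_contra h
          have heven : k % 2 = 0 := by omega
          apply hr
          have hxj : x = jFin k hk1 hkn := Fin.ext hveq
          rw [hxj]
          exact (jFin_mem_R' k hk1 hkn S).2 heven
        have hfix := hpar.2 hkodd
        rw [buildF_out k hk1 hkn S hsub hSc σ ρ hx hr hs, hxB]
        exact hfix.symm

lemma build_inj {k : ℕ} (hk1 : 1 ≤ k) (hkn : k ≤ n) (S₁ S₂ : Finset (Fin n))
    (hsub₁ : S₁ ⊆ Tset n k) (hSc₁ : S₁.card = n - k)
    (hsub₂ : S₂ ⊆ Tset n k) (hSc₂ : S₂.card = n - k)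
    (σ₁ σ₂ : Perm (Fin (k / 2))) (ρ₁ ρ₂ : Perm (Fin ((n - k) / 2)))
    (h : buildPerm k hk1 hkn S₁ hsub₁ hSc₁ σ₁ ρ₁ = buildPerm k hk1 hkn S₂ hsub₂ hSc₂ σ₂ ρ₂) :
    S₁ = S₂ ∧ σ₁ = σ₂ ∧ ρ₁ = ρ₂ := by
  have hS : S₁ = S₂ := by
    rw [← buildPerm_Sset k hk1 hkn S₁ hsub₁ hSc₁ σ₁ ρ₁,
      ← buildPerm_Sset k hk1 hkn S₂ hsub₂ hSc₂ σ₂ ρ₂, h]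
  subst hS
  refine ⟨rfl, ?_, ?_⟩
  · apply Equiv.ext
    intro i
    have hx : ((Fin.castLE (jlt hk1 hkn).le i : Fin n) : ℕ) < k / 2 := i.isLt
    have hv := congrArg (fun g : Perm (Fin n) => g (Fin.castLE (jlt hk1 hkn).le i)) h
    simp only [buildPerm] at hv
    rw [Function.Involutive.coe_toPerm, Function.Involutive.coe_toPerm,
      buildF_lt k hk1 hkn S₁ hsub₁ hSc₁ σ₁ ρ₁ hx,
      buildF_lt k hk1 hkn S₁ hsub₂ hSc₂ σ₂ ρ₂ hx] at hv
    have h2 := ((R'set k hk1 hkn S₁).orderIsoOfFin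
      (R'card k hk1 hkn S₁ hsub₁ hSc₁)).injective (Subtype.ext hv)
    have h3 : (⟨((Fin.castLE (jlt hk1 hkn).le i : Fin n) : ℕ), hx⟩ : Fin (k / 2)) = i :=
      Fin.ext rfl
    rw [h3] at h2
    exact h2
  · apply Equiv.ext
    intro t
    set eS := S₁.orderIsoOfFin hSc₁ with heS
    set x : Fin n := (eS (Fin.castLE (Nat.div_le_self _ _) t) : Fin n) with hxdef
    have hs : x ∈ S₁ := (eS _).2
    have hidx : (eS.symm ⟨x, hs⟩ : Fin (n - k)) = Fin.castLE (Nat.div_le_self _ _) t := by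
      have h0 : (⟨x, hs⟩ : {z // z ∈ S₁}) = eS (Fin.castLE (Nat.div_le_self _ _) t) :=
        Subtype.ext hxdef
      rw [h0, eS.symm_apply_apply]
    have hι : ((eS.symm ⟨x, hs⟩ : Fin (n - k)) : ℕ) < (n - k) / 2 := by
      rw [hidx]
      exact t.isLt
    have hv := congrArg (fun g : Perm (Fin n) => g x) h
    simp only [buildPerm] at hv
    rw [Function.Involutive.coe_toPerm, Function.Involutive.coe_toPerm,
      buildF_S1 k hk1 hkn S₁ hsub₁ hSc₁ σ₁ ρ₁ hs hι,
      buildF_S1 k hk1 hkn S₁ hsub₂ hSc₂ σ₂ ρ₂ hs hι] at hv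
    have h2 := (S₁.orderIsoOfFin hSc₁).injective (Subtype.ext hv)
    have h3 : padR (ρ₁ ⟨((eS.symm ⟨x, hs⟩ : Fin (n - k)) : ℕ), hι⟩) =
        padR (ρ₂ ⟨((eS.symm ⟨x, hs⟩ : Fin (n - k)) : ℕ), hι⟩) := h2
    have h4 : ρ₁ ⟨((eS.symm ⟨x, hs⟩ : Fin (n - k)) : ℕ), hι⟩ =
        ρ₂ ⟨((eS.symm ⟨x, hs⟩ : Fin (n - k)) : ℕ), hι⟩ := by
      have := congrArg Fin.val h3
      rw [padR_val, padR_val] at this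
      exact Fin.ext (by omega)
    have h5 : (⟨((eS.symm ⟨x, hs⟩ : Fin (n - k)) : ℕ), hι⟩ : Fin ((n - k) / 2)) = t := by
      apply Fin.ext
      show ((eS.symm ⟨x, hs⟩ : Fin (n - k)) : ℕ) = (t : ℕ)
      rw [hidx]
      rfl
    rw [h5] at h4
    exact h4

lemma stat_pos (τ : Perm (Fin n)) : 1 ≤ stat τ := by
  rw [stat]
  refine card_pos.2 ?_
  obtain ⟨x₀, -, hx₀⟩ := exists_mem_eq_inf' (univ_nonempty (α := Fin n)) (cmax τ)
  refine ⟨x₀, mem_filter.2 ⟨mem_univ _, ?_⟩⟩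
  have hB : Bv τ = cmax τ x₀ := hx₀
  rw [hB]
  exact cmin_le_cmax τ x₀

lemma stat_le (τ : Perm (Fin n)) : stat τ ≤ n := by
  rw [stat]
  exact (card_filter_le _ _).trans (by simp)

end surj
end Iav123

/-- For `n ≥ 1`, the number of involutions of `[n]` that I-avoid 123 — i.e. with no
three pairwise independent cycles (fixed points counting as cycles) — equals
`Σ_{k=1}^n ⌊k/2⌋!·⌊(n−k)/2⌋!·C(n − ⌊k/2⌋ − 1, n − k)`. -/
theorem involutions_Iavoiding_123_card (n : ℕ) (hn : 1 ≤ n) :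
    Nat.card {τ : Equiv.Perm (Fin n) // Function.Involutive ⇑τ ∧
      ¬ ∃ a b c : Fin n, a ≤ τ a ∧ b ≤ τ b ∧ c ≤ τ c ∧ τ a < b ∧ τ b < c} =
    ∑ k ∈ Finset.Icc 1 n,
      Nat.factorial (k / 2) * Nat.factorial ((n - k) / 2) *
        Nat.choose (n - k / 2 - 1) (n - k) := by
  classical
  haveI : NeZero n := ⟨by omega⟩
  open Iav123 in
  rw [Nat.card_eq_fintype_card, Fintype.card_subtype]
  rw [show (Finset.univ.filter fun τ : Equiv.Perm (Fin n) => Function.Involutive ⇑τ ∧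
      ¬ ∃ a b c : Fin n, a ≤ τ a ∧ b ≤ τ b ∧ c ≤ τ c ∧ τ a < b ∧ τ b < c) =
      Finset.univ.filter (fun τ : Equiv.Perm (Fin n) =>
        Function.Involutive ⇑τ ∧ ¬ Iav123.Pat τ) from
    Finset.filter_congr fun τ _ => and_congr_right fun hτ =>
      not_congr (Iav123.pat_iff hτ)]
  rw [Finset.card_eq_sum_card_fiberwise (f := Iav123.stat) (t := Finset.Icc 1 n)
    (fun τ _ => Finset.mem_Icc.2 ⟨Iav123.stat_pos τ, Iav123.stat_le τ⟩)]
  apply Finset.sum_congr rfl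
  intro k hk
  obtain ⟨hk1, hkn⟩ := Finset.mem_Icc.1 hk
  have hbij :
      (((Iav123.Tset n k).powersetCard (n - k)) ×ˢ
        (Finset.univ : Finset (Equiv.Perm (Fin (k / 2)) × Equiv.Perm (Fin ((n - k) / 2))))).card =
      ((Finset.univ.filter fun τ : Equiv.Perm (Fin n) =>
        Function.Involutive ⇑τ ∧ ¬ Iav123.Pat τ).filter fun τ => Iav123.stat τ = k).card := by
    refine Finset.card_bij (fun a ha => Iav123.buildPerm k hk1 hkn a.1
      (Finset.mem_powersetCard.1 (Finset.mem_product.1 ha).1).1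
      (Finset.mem_powersetCard.1 (Finset.mem_product.1 ha).1).2 a.2.1 a.2.2) ?_ ?_ ?_
    · intro a ha
      refine Finset.mem_filter.2 ⟨Finset.mem_filter.2 ⟨Finset.mem_univ _, ?_, ?_⟩, ?_⟩
      · rw [Iav123.buildPerm_coe]
        exact Iav123.buildF_invol k hk1 hkn a.1 _ _ a.2.1 a.2.2
      · exact Iav123.buildPerm_good k hk1 hkn a.1 _ _ a.2.1 a.2.2
      · exact Iav123.buildPerm_stat k hk1 hkn a.1 _ _ a.2.1 a.2.2
    · intro a₁ ha₁ a₂ ha₂ heq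
      obtain ⟨hS, hσ, hρ⟩ := Iav123.build_inj hk1 hkn a₁.1 a₂.1 _ _ _ _ _ _ _ _ heq
      exact Prod.ext hS (Prod.ext hσ hρ)
    · intro τ hτmem
      obtain ⟨h1, hstat⟩ := Finset.mem_filter.1 hτmem
      obtain ⟨-, hτ, hG⟩ := Finset.mem_filter.1 h1
      obtain ⟨S, hsub, hSc, σ, ρ, heq⟩ := Iav123.build_surj hk1 hkn hτ hG hstat
      refine ⟨⟨S, σ, ρ⟩, ?_, heq⟩
      exact Finset.mem_product.2 ⟨Finset.mem_powersetCard.2 ⟨hsub, hSc⟩, Finset.mem_univ _⟩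
  rw [← hbij, Finset.card_product, Finset.card_powersetCard,
    Iav123.Tset_card (Iav123.jlt hk1 hkn), Finset.card_univ, Fintype.card_prod,
    Fintype.card_perm, Fintype.card_perm, Fintype.card_fin, Fintype.card_fin]
  ring
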